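/- Let d ≥ 1 and L ≥ 2 be integers, and let G be the torus graph on (ZMod L)^d. For distinct vertices u, v, let P(u, v) denote the (finite, nonempty) set of geodesics from u to v, i.e., walks from u to v in G whose length equals dist_G(u, v); for an edge e of G, let N_e(u, v) be the number of geodesics in P(u, v) that traverse e (i.e., whose edge list contains e), and let N(u, v) = |P(u, v)|. Then for every edge e of G, the sum over all ordered pairs (u, v) of distinct vertices of the ratio N_e(u, v) / N(u, v) (as a real number) is at most L·(L^d − 1). -/

import Mathlib

/-- The torus graph on `(ZMod L)^d`: distinct vertices `u, v` are adjacent iff there is a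
coordinate `i` with `v = u + Pi.single i 1` or `v = u + Pi.single i (-1)`. -/
def torusGraph (d L : ℕ) : SimpleGraph (Fin d → ZMod L) where
  Adj u v := u ≠ v ∧ ∃ i : Fin d, v = u + Pi.single i 1 ∨ v = u + Pi.single i (-1)
  symm := by
    constructor
    rintro u v ⟨hne, i, h | h⟩
    · exact ⟨hne.symm, i, Or.inr (by simp [h, Pi.single_neg, sub_eq_add_neg])⟩
    · exact ⟨hne.symm, i, Or.inl (by simp [h, Pi.single_neg, sub_eq_add_neg])⟩
  loopless := ⟨fun u h => h.1 rfl⟩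

/-- The number of geodesics (shortest walks) from `u` to `v` in the torus graph. -/
noncomputable def geodesicCount (d L : ℕ) (u v : Fin d → ZMod L) : ℕ :=
  {p : (torusGraph d L).Walk u v | p.length = (torusGraph d L).dist u v}.ncard

/-- The number of geodesics from `u` to `v` in the torus graph that traverse the edge `e`. -/
noncomputable def geodesicCountThrough (d L : ℕ) (u v : Fin d → ZMod L)
    (e : Sym2 (Fin d → ZMod L)) : ℕ :=
  {p : (torusGraph d L).Walk u v |
    p.length = (torusGraph d L).dist u v ∧ e ∈ p.edges}.ncard

namespace TorusAux

open SimpleGraph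

variable {d L : ℕ}

/-- circle distance -/
def cdist (L : ℕ) [NeZero L] (x : ZMod L) : ℕ := min x.val (L - x.val)

section cdist
variable [NeZero L]

lemma cdist_zero : cdist L (0 : ZMod L) = 0 := by
  simp [cdist]

lemma two_mul_cdist_le (x : ZMod L) : 2 * cdist L x ≤ L := by
  have := ZMod.val_lt x
  unfold cdist
  omega

lemma cdist_neg (x : ZMod L) : cdist L (-x) = cdist L x := by
  have h1 := ZMod.val_lt x
  have h2 : x.val = 0 ↔ x = 0 := by
    constructor
    · intro h; exact (ZMod.val_eq_zero x).mp h
    · intro h; simp [h]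
  unfold cdist
  rw [ZMod.neg_val]
  by_cases hx : x = 0
  · simp [hx]
  · rw [if_neg hx]
    have : x.val ≠ 0 := fun h => hx (h2.mp h)
    omega

lemma cdist_add_one (hL : 2 ≤ L) (x : ZMod L) : cdist L (x + 1) ≤ cdist L x + 1 := by
  haveI : Fact (1 < L) := ⟨hL⟩
  have h1 := ZMod.val_lt x
  have hv : (x + 1).val = (x.val + 1) % L := by
    rw [ZMod.val_add, ZMod.val_one]
  rcases eq_or_lt_of_le (Nat.succ_le_of_lt h1) with h | h
  · have : (x + 1).val = 0 := by
      rw [hv]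
      have hL' : x.val + 1 = L := h
      rw [hL']
      simp
    unfold cdist
    rw [this]
    omega
  · have : (x + 1).val = x.val + 1 := by rw [hv, Nat.mod_eq_of_lt h]
    unfold cdist
    rw [this]
    omega

lemma cdist_sub_one (hL : 2 ≤ L) (x : ZMod L) : cdist L (x - 1) ≤ cdist L x + 1 := by
  have : x - 1 = -(-x + 1) := by ring
  rw [this, cdist_neg]
  calc cdist L (-x + 1) ≤ cdist L (-x) + 1 := cdist_add_one hL _
    _ = cdist L x + 1 := by rw [cdist_neg]

end cdist

section graph

instance : DecidableRel (torusGraph d L).Adj := fun u v =>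
  inferInstanceAs (Decidable (u ≠ v ∧ ∃ i : Fin d, v = u + Pi.single i 1 ∨ v = u + Pi.single i (-1)))

variable [NeZero L]

lemma one_ne_zero' (hL : 2 ≤ L) : (1 : ZMod L) ≠ 0 := by
  haveI : Fact (1 < L) := ⟨hL⟩
  exact one_ne_zero

lemma adj_iff {u v : Fin d → ZMod L} :
    (torusGraph d L).Adj u v ↔
      u ≠ v ∧ ∃ i : Fin d, v = u + Pi.single i 1 ∨ v = u + Pi.single i (-1) := Iff.rfl

/-- each step changes exactly one coordinate -/
lemma adj_changes (hL : 2 ≤ L) {u x : Fin d → ZMod L} (h : (torusGraph d L).Adj u x) :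
    ∃ i, u i ≠ x i ∧ ∀ j, j ≠ i → u j = x j := by
  obtain ⟨-, i, hi | hi⟩ := h
  · refine ⟨i, ?_, fun j hj => ?_⟩
    · rw [hi]; simp [one_ne_zero' hL]
    · rw [hi]; simp [Pi.single_eq_of_ne hj]
  · refine ⟨i, ?_, fun j hj => ?_⟩
    · rw [hi]
      simp only [Pi.add_apply, Pi.single_eq_same, ne_eq, left_eq_add]
      exact neg_ne_zero.mpr (one_ne_zero' hL)
    · rw [hi]; simp [Pi.single_eq_of_ne hj]

/-- step difference in a fixed coordinate is 0, 1 or -1 -/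
lemma adj_coord (hL : 2 ≤ L) {u x : Fin d → ZMod L} (h : (torusGraph d L).Adj u x) (i : Fin d) :
    x i = u i ∨ x i = u i + 1 ∨ x i = u i + (-1) := by
  obtain ⟨-, j, hj | hj⟩ := h
  · by_cases hij : i = j
    · subst hij; right; left; rw [hj]; simp
    · left; rw [hj]; simp [Pi.single_eq_of_ne hij]
  · by_cases hij : i = j
    · subst hij; right; right; rw [hj]; simp
    · left; rw [hj]; simp [Pi.single_eq_of_ne hij]

/-- number of steps of a walk that change coordinate `i` -/
def chg (i : Fin d) {u v : Fin d → ZMod L} (p : (torusGraph d L).Walk u v) : ℕ :=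
  p.darts.countP (fun dt => decide (dt.toProd.1 i ≠ dt.toProd.2 i))

lemma chg_nil {u : Fin d → ZMod L} (i : Fin d) : chg i (Walk.nil : (torusGraph d L).Walk u u) = 0 := by
  simp [chg]

lemma chg_cons {u x v : Fin d → ZMod L} (i : Fin d) (h : (torusGraph d L).Adj u x)
    (p : (torusGraph d L).Walk x v) :
    chg i (Walk.cons h p) = chg i p + (if u i ≠ x i then 1 else 0) := by
  simp only [chg, Walk.darts_cons, List.countP_cons]
  by_cases hc : u i ≠ x i <;> simp [hc]

lemma cdist_le_chg (hL : 2 ≤ L) {u v : Fin d → ZMod L} (p : (torusGraph d L).Walk u v)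
    (i : Fin d) : cdist L (v i - u i) ≤ chg i p := by
  induction p with
  | nil => simp [chg_nil, cdist_zero]
  | @cons a b c h q ih =>
    rw [chg_cons]
    rcases adj_coord hL h i with hc | hc | hc
    · rw [show c i - a i = c i - b i by rw [hc]]
      exact le_trans ih (Nat.le_add_right _ _)
    · have : c i - a i = (c i - b i) + 1 := by rw [hc]; ring
      rw [this, if_pos (by rw [hc]; simp [one_ne_zero' hL])]
      exact le_trans (cdist_add_one hL _) (by omega)
    · have h1 : c i - a i = (c i - b i) - 1 := by rw [hc]; ring
      have h2 : a i ≠ b i := by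
        rw [hc, ne_eq, left_eq_add]
        exact neg_ne_zero.mpr (one_ne_zero' hL)
      rw [h1, if_pos h2]
      exact le_trans (cdist_sub_one hL _) (by omega)

lemma sum_chg (hL : 2 ≤ L) {u v : Fin d → ZMod L} (p : (torusGraph d L).Walk u v) :
    ∑ i, chg i p = p.length := by
  induction p with
  | nil => simp [chg_nil]
  | @cons a b c h q ih =>
    simp only [chg_cons, Walk.length_cons, Finset.sum_add_distrib, ih]
    obtain ⟨i₀, hi₀, hoth⟩ := adj_changes hL h
    have : ∑ i, (if a i ≠ b i then 1 else 0) = 1 := by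
      rw [Finset.sum_eq_single i₀]
      · simp [hi₀]
      · intro j _ hj; simp [hoth j hj]
      · intro hj; exact absurd (Finset.mem_univ i₀) hj
    omega

/-- Walk along a single coordinate with `k` steps of value `c = ±1`. -/
lemma exists_walk_steps (hL : 2 ≤ L) (u : Fin d → ZMod L) (i : Fin d) (c : ZMod L)
    (hc : c = 1 ∨ c = -1) (k : ℕ) :
    ∃ p : (torusGraph d L).Walk u (u + Pi.single i ((k : ZMod L) * c)), p.length = k := by
  have hc0 : c ≠ 0 := by
    rcases hc with h | h <;> subst h
    · exact one_ne_zero' hL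
    · exact neg_ne_zero.mpr (one_ne_zero' hL)
  induction k with
  | zero =>
    refine ⟨Walk.nil.copy rfl ?_, by simp⟩
    simp
  | succ k ih =>
    obtain ⟨p, hp⟩ := ih
    have hadj : (torusGraph d L).Adj (u + Pi.single i ((k : ZMod L) * c))
        (u + Pi.single i (((k + 1 : ℕ) : ZMod L) * c)) := by
      have hstep : u + Pi.single i (((k + 1 : ℕ) : ZMod L) * c)
          = (u + Pi.single i ((k : ZMod L) * c)) + Pi.single i c := by
        rw [add_assoc, ← Pi.single_add]
        congr 1
        push_cast
        ring
      refine ⟨?_, i, ?_⟩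
      · intro hcontr
        have := congrFun hcontr i
        simp only [Pi.add_apply, Pi.single_eq_same, add_right_inj] at this
        apply hc0
        have : ((k : ZMod L) + 1) * c = (k : ZMod L) * c := by push_cast at this ⊢; linear_combination -this
        linear_combination this
      · rcases hc with h | h
        · left; rw [hstep, h]
        · right; rw [hstep, h]
    exact ⟨p.concat hadj, by rw [Walk.length_concat, hp]⟩

/-- Walk changing a single coordinate, with length the circle distance. -/
lemma exists_walk_single (hL : 2 ≤ L) (u : Fin d → ZMod L) (i : Fin d) (x : ZMod L) :
    ∃ p : (torusGraph d L).Walk u (u + Pi.single i x), p.length = cdist L x := by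
  have hv := ZMod.val_lt x
  by_cases h : x.val ≤ L - x.val
  · obtain ⟨p, hp⟩ := exists_walk_steps hL u i 1 (Or.inl rfl) x.val
    have hx : ((x.val : ZMod L)) * 1 = x := by
      rw [mul_one, ZMod.natCast_val, ZMod.cast_id]
    refine ⟨p.copy rfl (by rw [hx]), ?_⟩
    rw [Walk.length_copy, hp, cdist]
    omega
  · obtain ⟨p, hp⟩ := exists_walk_steps hL u i (-1) (Or.inr rfl) (L - x.val)
    have hx : (((L - x.val : ℕ) : ZMod L)) * (-1) = x := by
      rw [Nat.cast_sub hv.le, ZMod.natCast_self, ZMod.natCast_val, ZMod.cast_id]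
      ring
    refine ⟨p.copy rfl (by rw [hx]), ?_⟩
    rw [Walk.length_copy, hp, cdist]
    omega

lemma exists_walk (hL : 2 ≤ L) (u v : Fin d → ZMod L) :
    ∃ p : (torusGraph d L).Walk u v, p.length = ∑ i, cdist L (v i - u i) := by
  classical
  suffices h : ∀ s : Finset (Fin d),
      ∃ p : (torusGraph d L).Walk u (fun j => if j ∈ s then v j else u j),
        p.length = ∑ i ∈ s, cdist L (v i - u i) by
    obtain ⟨p, hp⟩ := h Finset.univ
    exact ⟨p.copy rfl (by funext j; simp), by rw [Walk.length_copy]; exact hp⟩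
  intro s
  induction s using Finset.induction_on with
  | empty => exact ⟨Walk.nil.copy rfl (by funext j; simp), by rw [Walk.length_copy]; simp⟩
  | @insert i s his ih =>
    obtain ⟨p, hp⟩ := ih
    obtain ⟨q, hq⟩ := exists_walk_single hL (fun j => if j ∈ s then v j else u j) i (v i - u i)
    have hend : (fun j => if j ∈ s then v j else u j) + Pi.single i (v i - u i)
        = fun j => if j ∈ insert i s then v j else u j := by
      funext j
      by_cases hj : j = i
      · subst hj
        simp [his]
      · simp [Pi.single_eq_of_ne hj, hj]
    refine ⟨p.append (q.copy rfl hend), ?_⟩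
    rw [Walk.length_append, Walk.length_copy, hp, hq, Finset.sum_insert his]
    ring

lemma torus_reachable (hL : 2 ≤ L) (u v : Fin d → ZMod L) : (torusGraph d L).Reachable u v :=
  ⟨(exists_walk hL u v).choose⟩

lemma dist_le_sum (hL : 2 ≤ L) (u v : Fin d → ZMod L) :
    (torusGraph d L).dist u v ≤ ∑ i, cdist L (v i - u i) := by
  obtain ⟨p, hp⟩ := exists_walk hL u v
  exact hp ▸ SimpleGraph.dist_le p

/-- On a geodesic, the number of `i`-steps is at most the circle distance in coordinate `i`. -/
lemma chg_le_cdist (hL : 2 ≤ L) {u v : Fin d → ZMod L} (p : (torusGraph d L).Walk u v)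
    (hp : p.length = (torusGraph d L).dist u v) (i : Fin d) :
    chg i p ≤ cdist L (v i - u i) := by
  have h1 : ∀ j ∈ Finset.univ, cdist L (v j - u j) ≤ chg j p := fun j _ => cdist_le_chg hL p j
  have h2 : ∑ j, chg j p ≤ ∑ j, cdist L (v j - u j) := by
    rw [sum_chg hL p, hp]; exact dist_le_sum hL u v
  have h3 : ∑ j, cdist L (v j - u j) = ∑ j, chg j p :=
    le_antisymm (Finset.sum_le_sum h1) h2
  have h4 := (Finset.sum_eq_sum_iff_of_le h1).mp h3 i (Finset.mem_univ i)
  omega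


/-- translation graph homomorphism -/
def trHom (t : Fin d → ZMod L) : torusGraph d L →g torusGraph d L where
  toFun := (· + t)
  map_rel' := by
    rintro u v ⟨hne, i, h | h⟩
    · refine ⟨by simpa using hne, i, Or.inl ?_⟩
      rw [h]; abel
    · refine ⟨by simpa using hne, i, Or.inr ?_⟩
      rw [h]; abel

@[simp] lemma trHom_apply (t u : Fin d → ZMod L) : trHom t u = u + t := rfl

lemma trHom_injective (t : Fin d → ZMod L) : Function.Injective (trHom (d := d) (L := L) t) :=
  fun a b h => by simpa using add_right_cancel (a := a) (b := t) h

lemma dist_translate_le (hL : 2 ≤ L) (u v u' v' t : Fin d → ZMod L)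
    (hu : u' = u + t) (hv : v' = v + t) :
    (torusGraph d L).dist u' v' ≤ (torusGraph d L).dist u v := by
  subst hu hv
  obtain ⟨p, hp⟩ := (torus_reachable hL u v).exists_walk_length_eq_dist
  calc (torusGraph d L).dist (u + t) (v + t) ≤ (p.map (trHom t)).length :=
        SimpleGraph.dist_le _
    _ = (torusGraph d L).dist u v := by rw [Walk.length_map, hp]

lemma dist_translate (hL : 2 ≤ L) (u v t : Fin d → ZMod L) :
    (torusGraph d L).dist (u + t) (v + t) = (torusGraph d L).dist u v := by
  refine le_antisymm (dist_translate_le hL u v _ _ t rfl rfl) ?_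
  exact dist_translate_le hL (u + t) (v + t) u v (-t) (by abel) (by abel)

lemma setFinite_walks (u v : Fin d → ZMod L) (n : ℕ) :
    {p : (torusGraph d L).Walk u v | p.length = n}.Finite := Set.toFinite _

lemma thru_le (hL : 2 ≤ L) (u v u' v' t : Fin d → ZMod L) (e : Sym2 (Fin d → ZMod L))
    (hu : u' = u + t) (hv : v' = v + t) :
    geodesicCountThrough d L u v e ≤
      geodesicCountThrough d L u' v' (Sym2.map (· + t) e) := by
  subst hu hv
  unfold geodesicCountThrough
  refine Set.ncard_le_ncard_of_injOn (fun p => p.map (trHom t)) ?_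
    ((Walk.map_injective_of_injective (trHom_injective t) u v)).injOn
    ((setFinite_walks _ _ ((torusGraph d L).dist (u + t) (v + t))).subset (fun p hp => hp.1))
  rintro p ⟨hl, he⟩
  refine ⟨?_, ?_⟩
  · exact (Walk.length_map (trHom t) p).trans (by rw [hl, dist_translate hL])
  · have h : Sym2.map (trHom t) e ∈ (p.map (trHom t)).edges := by
      rw [Walk.edges_map]
      exact List.mem_map_of_mem he
    exact h

lemma count_le (hL : 2 ≤ L) (u v u' v' t : Fin d → ZMod L)
    (hu : u' = u + t) (hv : v' = v + t) :
    geodesicCount d L u v ≤ geodesicCount d L u' v' := by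
  subst hu hv
  unfold geodesicCount
  refine Set.ncard_le_ncard_of_injOn (fun p => p.map (trHom t)) ?_
    ((Walk.map_injective_of_injective (trHom_injective t) u v)).injOn
    (setFinite_walks _ _ _)
  rintro p hl
  exact (Walk.length_map (trHom t) p).trans (by rw [Set.mem_setOf_eq] at hl; rw [hl, dist_translate hL])

lemma map_map_neg (t : Fin d → ZMod L) (e : Sym2 (Fin d → ZMod L)) :
    Sym2.map (· + (-t)) (Sym2.map (· + t) e) = e := by
  rw [Sym2.map_map, show ((· + (-t)) ∘ (· + t) : (Fin d → ZMod L) → _) = id from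
    funext fun x => by simp, Sym2.map_id, id_eq]

lemma count_translate (hL : 2 ≤ L) (u v t : Fin d → ZMod L) :
    geodesicCount d L (u + t) (v + t) = geodesicCount d L u v := by
  refine le_antisymm ?_ (count_le hL u v _ _ t rfl rfl)
  exact count_le hL (u + t) (v + t) u v (-t) (by abel) (by abel)

lemma thru_translate (hL : 2 ≤ L) (u v t : Fin d → ZMod L) (e : Sym2 (Fin d → ZMod L)) :
    geodesicCountThrough d L (u + t) (v + t) (Sym2.map (· + t) e) =
      geodesicCountThrough d L u v e := by
  refine le_antisymm ?_ (thru_le hL u v _ _ t e rfl rfl)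
  have h := thru_le hL (u + t) (v + t) u v (-t) (Sym2.map (· + t) e) (by abel) (by abel)
  rwa [map_map_neg] at h

lemma card_translates_le (hL : 2 ≤ L) {u v : Fin d → ZMod L}
    (p : (torusGraph d L).Walk u v) (hp : p.length = (torusGraph d L).dist u v)
    {e : Sym2 (Fin d → ZMod L)} (he : e ∈ (torusGraph d L).edgeSet) :
    (Finset.univ.filter fun t : Fin d → ZMod L => Sym2.map (· + t) e ∈ p.edges).card ≤ L := by
  classical
  induction e using Sym2.ind with
  | _ a b =>
  rw [SimpleGraph.mem_edgeSet] at he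
  obtain ⟨hab, i, hi⟩ := he
  have hi' : a i ≠ b i := by
    rcases hi with h | h
    · rw [h]; simp [one_ne_zero' hL]
    · rw [h]
      simp only [Pi.add_apply, Pi.single_eq_same, ne_eq, left_eq_add]
      exact neg_ne_zero.mpr (one_ne_zero' hL)
  have hF : ∀ t : Fin d → ZMod L, Sym2.map (· + t) s(a, b) = s(a + t, b + t) := fun t => by
    simp
  set T : Finset (Sym2 (Fin d → ZMod L)) :=
    ((p.darts.filter (fun dt => decide (dt.toProd.1 i ≠ dt.toProd.2 i))).map
      SimpleGraph.Dart.edge).toFinset with hT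
  have hmaps : ∀ t ∈ (Finset.univ.filter fun t : Fin d → ZMod L =>
      Sym2.map (· + t) s(a, b) ∈ p.edges), Sym2.map (· + t) s(a, b) ∈ T := by
    intro t ht
    rw [Finset.mem_filter] at ht
    have hmem : Sym2.map (· + t) s(a, b) ∈ p.darts.map SimpleGraph.Dart.edge := ht.2
    rw [List.mem_map] at hmem
    obtain ⟨dt, hdt, hedge⟩ := hmem
    rw [hT, List.mem_toFinset, List.mem_map]
    refine ⟨dt, List.mem_filter.mpr ⟨hdt, ?_⟩, hedge⟩
    rw [hF] at hedge
    have : s(dt.toProd.1, dt.toProd.2) = s(a + t, b + t) := hedge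
    rw [Sym2.eq_iff] at this
    rcases this with ⟨h1, h2⟩ | ⟨h1, h2⟩
    · simp only [decide_eq_true_eq, h1, h2, ne_eq]
      intro hcontr
      exact hi' (add_right_cancel hcontr)
    · simp only [decide_eq_true_eq, h1, h2, ne_eq]
      intro hcontr
      exact hi' (add_right_cancel hcontr.symm)
  have hfib : ∀ f ∈ T, ((Finset.univ.filter fun t : Fin d → ZMod L =>
      Sym2.map (· + t) s(a, b) ∈ p.edges).filter
        (fun t => Sym2.map (· + t) s(a, b) = f)).card ≤ 2 := by
    intro f _
    rcases ((Finset.univ.filter fun t : Fin d → ZMod L =>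
        Sym2.map (· + t) s(a, b) ∈ p.edges).filter
          (fun t => Sym2.map (· + t) s(a, b) = f)).eq_empty_or_nonempty with hemp | ⟨t₀, ht₀⟩
    · rw [hemp]; simp
    · have ht₀' : Sym2.map (· + t₀) s(a, b) = f := (Finset.mem_filter.mp ht₀).2
      refine le_trans (Finset.card_le_card (fun t₁ ht₁ => ?_))
        ((Finset.card_insert_le t₀ {t₀ + (b - a)}).trans (by simp))
      have ht₁' : Sym2.map (· + t₁) s(a, b) = f := (Finset.mem_filter.mp ht₁).2
      have heq : s(a + t₁, b + t₁) = s(a + t₀, b + t₀) := by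
        rw [← hF, ← hF, ht₁', ht₀']
      rw [Sym2.eq_iff] at heq
      rcases heq with ⟨h1, h2⟩ | ⟨h1, h2⟩
      · have : t₁ = t₀ := add_left_cancel h1
        simp [this]
      · have : t₁ = t₀ + (b - a) := by
          have := add_left_cancel (a := a) (show a + t₁ = a + (t₀ + (b - a)) by
            rw [h1]; abel)
          exact this
        simp [this]
  have hcard := Finset.card_le_mul_card_image_of_maps_to hmaps 2 hfib
  have hTcard : T.card ≤ chg i p := by
    calc T.card ≤ ((p.darts.filter (fun dt => decide (dt.toProd.1 i ≠ dt.toProd.2 i))).map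
          SimpleGraph.Dart.edge).length := List.toFinset_card_le _
      _ = (p.darts.filter (fun dt => decide (dt.toProd.1 i ≠ dt.toProd.2 i))).length := by
          rw [List.length_map]
      _ = chg i p := by rw [chg, List.countP_eq_length_filter]
  have hchg : chg i p ≤ cdist L (v i - u i) := chg_le_cdist hL p hp i
  have h2c : 2 * cdist L (v i - u i) ≤ L := two_mul_cdist_le _
  calc (Finset.univ.filter fun t : Fin d → ZMod L =>
        Sym2.map (· + t) s(a, b) ∈ p.edges).card ≤ 2 * T.card := hcard
    _ ≤ 2 * chg i p := by omega
    _ ≤ 2 * cdist L (v i - u i) := by omega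
    _ ≤ L := h2c

lemma geodesicCount_pos (hL : 2 ≤ L) (u v : Fin d → ZMod L) :
    0 < geodesicCount d L u v := by
  obtain ⟨p, hp⟩ := (torus_reachable hL u v).exists_walk_length_eq_dist
  unfold geodesicCount
  rw [Set.ncard_pos (setFinite_walks u v _)]
  exact ⟨p, hp⟩

lemma key_sum (hL : 2 ≤ L) (e : Sym2 (Fin d → ZMod L)) (he : e ∈ (torusGraph d L).edgeSet)
    (w : Fin d → ZMod L) :
    ∑ u : Fin d → ZMod L,
      (geodesicCountThrough d L u (u + w) e : ℝ) / (geodesicCount d L u (u + w) : ℝ)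
      ≤ (L : ℝ) := by
  classical
  set N := geodesicCount d L 0 w with hNdef
  have hN : 0 < N := geodesicCount_pos hL 0 w
  have hcnt : ∀ u : Fin d → ZMod L, geodesicCount d L u (u + w) = N := by
    intro u
    have := count_translate hL 0 w u
    rwa [zero_add, add_comm w u] at this
  have hthru : ∀ u : Fin d → ZMod L,
      geodesicCountThrough d L u (u + w) e
        = geodesicCountThrough d L 0 w (Sym2.map (· + (-u)) e) := by
    intro u
    have h2 := map_map_neg (-u) e
    rw [neg_neg] at h2
    have := thru_translate hL 0 w u (Sym2.map (· + (-u)) e)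
    rw [zero_add, add_comm w u, h2] at this
    exact this
  have hfin := setFinite_walks (0 : Fin d → ZMod L) w ((torusGraph d L).dist 0 w)
  set T := hfin.toFinset with hTdef
  have hNT : N = T.card := by
    rw [hNdef]
    unfold geodesicCount
    rw [← Set.ncard_coe_finset]
    congr 1
    ext p
    simp [hTdef, hfin.mem_toFinset]
  have hthru2 : ∀ E : Sym2 (Fin d → ZMod L),
      geodesicCountThrough d L 0 w E = (T.filter fun p => E ∈ p.edges).card := by
    intro E
    unfold geodesicCountThrough
    rw [← Set.ncard_coe_finset]
    congr 1
    ext p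
    simp only [Set.mem_setOf_eq, Finset.coe_filter, hTdef, Set.Finite.mem_toFinset,
      Set.mem_setOf_eq]
  have hsum : ∑ u : Fin d → ZMod L, geodesicCountThrough d L u (u + w) e ≤ N * L := by
    have e1 : ∑ u : Fin d → ZMod L, geodesicCountThrough d L u (u + w) e
        = ∑ t : Fin d → ZMod L, geodesicCountThrough d L 0 w (Sym2.map (· + t) e) := by
      rw [show (∑ u : Fin d → ZMod L, geodesicCountThrough d L u (u + w) e)
          = ∑ u : Fin d → ZMod L, geodesicCountThrough d L 0 w (Sym2.map (· + (-u)) e)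
        from Finset.sum_congr rfl fun u _ => hthru u]
      exact Equiv.sum_comp (Equiv.neg (Fin d → ZMod L))
        (fun t => geodesicCountThrough d L 0 w (Sym2.map (· + t) e))
    rw [e1]
    calc ∑ t : Fin d → ZMod L, geodesicCountThrough d L 0 w (Sym2.map (· + t) e)
        = ∑ t : Fin d → ZMod L, (T.filter fun p => Sym2.map (· + t) e ∈ p.edges).card := by
          exact Finset.sum_congr rfl fun t _ => hthru2 _
      _ = ∑ t : Fin d → ZMod L, ∑ p ∈ T, (if Sym2.map (· + t) e ∈ p.edges then 1 else 0) := by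
          exact Finset.sum_congr rfl fun t _ => Finset.card_filter _ _
      _ = ∑ p ∈ T, ∑ t : Fin d → ZMod L, (if Sym2.map (· + t) e ∈ p.edges then 1 else 0) :=
          Finset.sum_comm
      _ = ∑ p ∈ T, (Finset.univ.filter fun t : Fin d → ZMod L =>
            Sym2.map (· + t) e ∈ p.edges).card :=
          Finset.sum_congr rfl fun p _ => (Finset.card_filter _ _).symm
      _ ≤ ∑ _p ∈ T, L := by
          refine Finset.sum_le_sum fun p hp => ?_
          have hplen : p.length = (torusGraph d L).dist 0 w := by
            have := hfin.mem_toFinset.mp hp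
            exact this
          exact card_translates_le hL p hplen he
      _ = T.card * L := by rw [Finset.sum_const, smul_eq_mul]
      _ = N * L := by rw [hNT]
  have hNR : (0 : ℝ) < (N : ℝ) := by exact_mod_cast hN
  have : ∑ u : Fin d → ZMod L,
      (geodesicCountThrough d L u (u + w) e : ℝ) / (geodesicCount d L u (u + w) : ℝ)
      = (∑ u : Fin d → ZMod L, (geodesicCountThrough d L u (u + w) e : ℝ)) / (N : ℝ) := by
    rw [Finset.sum_div]
    exact Finset.sum_congr rfl fun u _ => by rw [hcnt u]
  rw [this, div_le_iff₀ hNR]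
  calc (∑ u : Fin d → ZMod L, (geodesicCountThrough d L u (u + w) e : ℝ))
      = ((∑ u : Fin d → ZMod L, geodesicCountThrough d L u (u + w) e : ℕ) : ℝ) := by
        push_cast; ring
    _ ≤ ((N * L : ℕ) : ℝ) := by exact_mod_cast hsum
    _ = (L : ℝ) * (N : ℝ) := by push_cast; ring

end graph

end TorusAux

theorem torusGraph_flow_congestion (d L : ℕ) (hd : 1 ≤ d) (hL : 2 ≤ L) [NeZero L]
    (e : Sym2 (Fin d → ZMod L)) (he : e ∈ (torusGraph d L).edgeSet) :
    ∑ u : Fin d → ZMod L, ∑ v : Fin d → ZMod L,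
        (if u ≠ v then
          (geodesicCountThrough d L u v e : ℝ) / (geodesicCount d L u v : ℝ)
        else 0)
      ≤ (L : ℝ) * ((L : ℝ) ^ d - 1) := by
  classical
  have hreindex : ∀ u : Fin d → ZMod L,
      (∑ v : Fin d → ZMod L, (if u ≠ v then
          (geodesicCountThrough d L u v e : ℝ) / (geodesicCount d L u v : ℝ) else 0))
      = ∑ w : Fin d → ZMod L, (if w ≠ 0 then
          (geodesicCountThrough d L u (u + w) e : ℝ) / (geodesicCount d L u (u + w) : ℝ)
          else 0) := by
    intro u
    rw [← Equiv.sum_comp (Equiv.addLeft u) (fun v => if u ≠ v then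
      (geodesicCountThrough d L u v e : ℝ) / (geodesicCount d L u v : ℝ) else 0)]
    refine Finset.sum_congr rfl fun w _ => ?_
    by_cases hw : w = 0
    · simp [hw]
    · have h1 : u ≠ (Equiv.addLeft u) w := by
        simp only [Equiv.coe_addLeft]
        intro hcontr
        exact hw (left_eq_add.mp hcontr)
      rw [if_pos h1, if_pos hw]
      simp only [Equiv.coe_addLeft]
  calc ∑ u : Fin d → ZMod L, ∑ v : Fin d → ZMod L,
        (if u ≠ v then
          (geodesicCountThrough d L u v e : ℝ) / (geodesicCount d L u v : ℝ) else 0)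
      = ∑ u : Fin d → ZMod L, ∑ w : Fin d → ZMod L, (if w ≠ 0 then
          (geodesicCountThrough d L u (u + w) e : ℝ) / (geodesicCount d L u (u + w) : ℝ)
          else 0) := Finset.sum_congr rfl fun u _ => hreindex u
    _ = ∑ w : Fin d → ZMod L, ∑ u : Fin d → ZMod L, (if w ≠ 0 then
          (geodesicCountThrough d L u (u + w) e : ℝ) / (geodesicCount d L u (u + w) : ℝ)
          else 0) := Finset.sum_comm
    _ ≤ ∑ w : Fin d → ZMod L, (if w ≠ 0 then (L : ℝ) else 0) := by
        refine Finset.sum_le_sum fun w _ => ?_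
        by_cases hw : w = 0
        · simp [hw]
        · simp only [hw, ne_eq, not_false_eq_true, if_true]
          exact TorusAux.key_sum hL e he w
    _ = ((Finset.univ.filter (fun w : Fin d → ZMod L => w ≠ 0)).card : ℝ) * (L : ℝ) := by
        rw [Finset.sum_ite, Finset.sum_const, Finset.sum_const]
        simp [mul_comm]
    _ ≤ (L : ℝ) * ((L : ℝ) ^ d - 1) := by
        have hcard : (Finset.univ.filter (fun w : Fin d → ZMod L => w ≠ 0)).card
            = L ^ d - 1 := by
          rw [Finset.filter_ne', Finset.card_erase_of_mem (Finset.mem_univ _)]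
          congr 1
          rw [Finset.card_univ, Fintype.card_fun, ZMod.card, Fintype.card_fin]
        rw [hcard]
        have h1 : 1 ≤ L ^ d := Nat.one_le_pow d L (by omega)
        have : ((L ^ d - 1 : ℕ) : ℝ) = (L : ℝ) ^ d - 1 := by
          push_cast [h1]
          ring
        rw [this]
        ring_nf
        exact le_refl _
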